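/- Let α ∈ [0,1), let f(α) = 20 if α ∈ [0,1/2], f(α) = 25 if α ∈ (1/2,5/7], and f(α) = 7/(1−α) + 3 if α ∈ (5/7,1). Let s ≥ 1 be an integer and set n = s + ⌊3s/2⌋ + 1. If n ≥ f(α), then the A_α-spectral radius of G = K_s ∨ ((⌊3s/2⌋+1)K₁) satisfies ρ_α(G) < n − 3. -/

import Mathlib

open Finset

/-- The join `G ∨g H` of two graphs: the disjoint union together with all edges
between the two parts. -/
def SimpleGraph.gjoin {α β : Type*} (G : SimpleGraph α) (H : SimpleGraph β) :
    SimpleGraph (α ⊕ β) where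
  Adj u v := match u, v with
    | Sum.inl u, Sum.inl v => G.Adj u v
    | Sum.inr u, Sum.inr v => H.Adj u v
    | _, _ => True
  symm := ⟨fun u v => match u, v with
    | Sum.inl u, Sum.inl v => G.adj_symm
    | Sum.inr u, Sum.inr v => H.adj_symm
    | Sum.inl _, Sum.inr _ | Sum.inr _, Sum.inl _ => fun _ => trivial⟩
  loopless := ⟨fun u => by cases u <;> simp⟩

infixl:60 " ∨g " => SimpleGraph.gjoin

/-- The `A_α`-matrix `α • D(G) + (1-α) • A(G)` of a graph `G`. -/
noncomputable def aAlphaMatrix {V : Type*} [Fintype V] [DecidableEq V]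
    (α : ℝ) (G : SimpleGraph V) : Matrix V V ℝ := by
  classical
  exact α • Matrix.diagonal (fun v => (G.degree v : ℝ)) + (1 - α) • G.adjMatrix ℝ

/-- The `A_α`-spectral radius `ρ_α(G)`: the largest eigenvalue of `A_α(G)`. -/
noncomputable def rhoAlpha {V : Type*} [Fintype V] [DecidableEq V]
    (α : ℝ) (G : SimpleGraph V) : ℝ :=
  sSup (spectrum ℝ (aAlphaMatrix α G))

/-- The signless Laplacian matrix `Q(G) = D(G) + A(G)`. -/
noncomputable def signlessLaplacian {V : Type*} [Fintype V] [DecidableEq V]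
    (G : SimpleGraph V) : Matrix V V ℝ := by
  classical
  exact Matrix.diagonal (fun v => (G.degree v : ℝ)) + G.adjMatrix ℝ

/-- `q(G)`: the largest eigenvalue of the signless Laplacian matrix of `G`. -/
noncomputable def qIndex {V : Type*} [Fintype V] [DecidableEq V]
    (G : SimpleGraph V) : ℝ :=
  sSup (spectrum ℝ (signlessLaplacian G))

/-- The number of edges (the size) of a graph. -/
noncomputable def edgeCount {V : Type*} [Fintype V] [DecidableEq V]
    (G : SimpleGraph V) : ℕ := by
  classical
  exact G.edgeFinset.card

/-- `i(G - S)`: the number of isolated vertices of the graph obtained from `G`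
by deleting the vertices of `S` together with all edges incident to `S`. -/
noncomputable def isolGminus {V : Type*} [Fintype V] [DecidableEq V]
    (G : SimpleGraph V) (S : Finset V) : ℕ := by
  classical
  exact (Finset.univ.filter (fun v => v ∉ S ∧ ∀ u, G.Adj v u → u ∈ S)).card

/-- `F(n)`: the edge bound from Theorem 1.1. -/
def Fbound (n : ℕ) : ℕ :=
  if n = 6 then 9 else if n = 8 then 18 else (n - 2).choose 2 + 2

/-- `f(α)`: the order bound from Theorem 1.2. -/
noncomputable def fAlpha (α : ℝ) : ℝ :=
  if α ≤ 1 / 2 then 20 else if α ≤ 5 / 7 then 25 else 7 / (1 - α) + 3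


section AuxiliaryLemmas

open Matrix

private lemma specLt {V : Type*} [Fintype V] [DecidableEq V] (M : Matrix V V ℝ) (c : ℝ)
    (h : ∀ x : V → ℝ, x ≠ 0 → 0 < x ⬝ᵥ ((c • (1 : Matrix V V ℝ) - M) *ᵥ x)) :
    ∀ μ ∈ spectrum ℝ M, μ < c := by
  intro μ hμ
  rw [spectrum.mem_iff] at hμ
  rw [Matrix.isUnit_iff_isUnit_det, isUnit_iff_ne_zero, not_not] at hμ
  obtain ⟨v, hv0, hv⟩ := (Matrix.exists_mulVec_eq_zero_iff).2 hμ
  have hMv : M *ᵥ v = μ • v := by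
    rw [Algebra.algebraMap_eq_smul_one] at hv
    rw [Matrix.sub_mulVec, Matrix.smul_mulVec, Matrix.one_mulVec, sub_eq_zero] at hv
    exact hv.symm
  have h2 := h v hv0
  rw [Matrix.sub_mulVec, Matrix.smul_mulVec, Matrix.one_mulVec, hMv,
    dotProduct_sub, dotProduct_smul, dotProduct_smul] at h2
  have hvv : 0 < v ⬝ᵥ v := by
    have := dotProduct_self_eq_zero (v := v)
    have hnn : 0 ≤ v ⬝ᵥ v := Finset.sum_nonneg fun i _ => mul_self_nonneg _
    rcases hnn.lt_or_eq with h' | h'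
    · exact h'
    · exact absurd (this.1 h'.symm) hv0
  have : 0 < (c - μ) * (v ⬝ᵥ v) := by
    rw [smul_eq_mul, smul_eq_mul] at h2; nlinarith
  nlinarith

private lemma sSupSpecLt {V : Type*} [Fintype V] [DecidableEq V] (M : Matrix V V ℝ) (c : ℝ)
    (hc : 0 < c)
    (h : ∀ μ ∈ spectrum ℝ M, μ < c) : sSup (spectrum ℝ M) < c := by
  rcases Set.eq_empty_or_nonempty (spectrum ℝ M) with he | hne
  · rw [he, Real.sSup_empty]; exact hc
  · exact h _ (hne.csSup_mem (Matrix.finite_spectrum M))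

variable {s m : ℕ}

local notation "CSG" => ((⊤ : SimpleGraph (Fin s)) ∨g (⊥ : SimpleGraph (Fin m)))

private lemma adj_ll (i j : Fin s) : (CSG).Adj (Sum.inl i) (Sum.inl j) ↔ i ≠ j := Iff.rfl
private lemma adj_lr (i : Fin s) (j : Fin m) : (CSG).Adj (Sum.inl i) (Sum.inr j) := trivial
private lemma adj_rl (j : Fin m) (i : Fin s) : (CSG).Adj (Sum.inr j) (Sum.inl i) := trivial
private lemma adj_rr (i j : Fin m) : ¬ (CSG).Adj (Sum.inr i) (Sum.inr j) := fun h => h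

private lemma deg_l [DecidableRel (CSG).Adj] (i : Fin s) :
    (CSG).degree (Sum.inl i) = (s - 1) + m := by
  rw [SimpleGraph.degree, SimpleGraph.neighborFinset_eq_filter, Finset.card_filter,
    Fintype.sum_sum_type]
  have h1 : (∑ x : Fin s, if (CSG).Adj (Sum.inl i) (Sum.inl x) then (1:ℕ) else 0) = s - 1 := by
    simp only [adj_ll]
    rw [← Finset.card_filter, Finset.filter_ne, Finset.card_erase_of_mem (mem_univ i)]
    simp
  have h2 : (∑ x : Fin m, if (CSG).Adj (Sum.inl i) (Sum.inr x) then (1:ℕ) else 0) = m := by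
    simp only [if_pos (adj_lr i _)]; simp
  rw [h1, h2]

private lemma deg_r [DecidableRel (CSG).Adj] (j : Fin m) :
    (CSG).degree (Sum.inr j) = s := by
  rw [SimpleGraph.degree, SimpleGraph.neighborFinset_eq_filter, Finset.card_filter,
    Fintype.sum_sum_type]
  have h1 : (∑ x : Fin s, if (CSG).Adj (Sum.inr j) (Sum.inl x) then (1:ℕ) else 0) = s := by
    simp only [if_pos (adj_rl j _)]; simp
  have h2 : (∑ x : Fin m, if (CSG).Adj (Sum.inr j) (Sum.inr x) then (1:ℕ) else 0) = 0 := by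
    simp only [if_neg (adj_rr j _)]; simp
  rw [h1, h2]
  omega

private lemma sum_ite_ne (a : Fin s → ℝ) (i : Fin s) :
    (∑ j, if i ≠ j then a j else 0) = (∑ j, a j) - a i := by
  have h : ∀ j : Fin s, (if i ≠ j then a j else 0) = a j - (if i = j then a j else 0) := by
    intro j; by_cases h : i = j <;> simp [h]
  rw [Finset.sum_congr rfl (fun j _ => h j), Finset.sum_sub_distrib, Finset.sum_ite_eq,
    if_pos (mem_univ i)]

private lemma quadform (α : ℝ) (hs : 1 ≤ s) (c : ℝ) (x : Fin s ⊕ Fin m → ℝ) :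
    x ⬝ᵥ ((c • (1 : Matrix _ _ ℝ) - aAlphaMatrix α CSG) *ᵥ x)
    = (c - α*((s:ℝ) - 1 + m)) * (∑ i, x (Sum.inl i)^2)
      + (c - α*s) * (∑ j, x (Sum.inr j)^2)
      - (1-α) * ((∑ i, x (Sum.inl i))^2 - (∑ i, x (Sum.inl i)^2)
          + 2*(∑ i, x (Sum.inl i))*(∑ j, x (Sum.inr j))) := by
  classical
  rw [Matrix.sub_mulVec, Matrix.smul_mulVec, Matrix.one_mulVec, dotProduct_sub,
    dotProduct_smul]
  rw [aAlphaMatrix]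
  rw [Matrix.add_mulVec, Matrix.smul_mulVec, Matrix.smul_mulVec, dotProduct_add,
    dotProduct_smul, dotProduct_smul]
  have hxx : x ⬝ᵥ x = (∑ i, x (Sum.inl i)^2) + (∑ j, x (Sum.inr j)^2) := by
    rw [dotProduct, Fintype.sum_sum_type]
    simp [sq]
  have hD : x ⬝ᵥ (Matrix.diagonal (fun v => ((CSG).degree v : ℝ)) *ᵥ x)
      = ((s:ℝ) - 1 + m) * (∑ i, x (Sum.inl i)^2) + (s:ℝ) * (∑ j, x (Sum.inr j)^2) := by
    rw [dotProduct, Fintype.sum_sum_type]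
    simp only [Matrix.mulVec_diagonal, deg_l, deg_r]
    have hcast : ((s - 1 + m : ℕ) : ℝ) = (s:ℝ) - 1 + m := by
      push_cast [Nat.cast_sub hs]; ring
    rw [hcast, Finset.mul_sum, Finset.mul_sum]
    congr 1 <;> exact Finset.sum_congr rfl (fun i _ => by ring)
  have hA : x ⬝ᵥ ((CSG).adjMatrix ℝ *ᵥ x)
      = (∑ i, x (Sum.inl i) * (((∑ i', x (Sum.inl i')) - x (Sum.inl i))
          + (∑ j, x (Sum.inr j))))
        + (∑ j, x (Sum.inr j) * (∑ i, x (Sum.inl i))) := by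
    rw [dotProduct, Fintype.sum_sum_type]
    congr 1
    · apply Finset.sum_congr rfl
      intro i _
      rw [SimpleGraph.adjMatrix_mulVec_apply, SimpleGraph.neighborFinset_eq_filter,
        Finset.sum_filter, Fintype.sum_sum_type]
      simp only [adj_ll, if_pos (adj_lr i _)]
      rw [sum_ite_ne]
    · apply Finset.sum_congr rfl
      intro j _
      rw [SimpleGraph.adjMatrix_mulVec_apply, SimpleGraph.neighborFinset_eq_filter,
        Finset.sum_filter, Fintype.sum_sum_type]
      simp only [if_pos (adj_rl j _), if_neg (adj_rr j _)]
      simp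
  rw [hxx, hD, hA]
  have e1 : (∑ i, x (Sum.inl i) * (((∑ i', x (Sum.inl i')) - x (Sum.inl i))
        + (∑ j, x (Sum.inr j))))
      = (∑ i, x (Sum.inl i))^2 - (∑ i, x (Sum.inl i)^2)
        + (∑ i, x (Sum.inl i)) * (∑ j, x (Sum.inr j)) := by
    rw [Finset.sum_congr rfl (fun i (_ : i ∈ univ) => mul_add (x (Sum.inl i)) _ _),
      Finset.sum_add_distrib,
      Finset.sum_congr rfl (fun i (_ : i ∈ univ) => mul_sub (x (Sum.inl i)) _ _),
      Finset.sum_sub_distrib, ← Finset.sum_mul, ← Finset.sum_mul]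
    ring_nf
  have e2 : (∑ j, x (Sum.inr j) * (∑ i, x (Sum.inl i)))
      = (∑ j, x (Sum.inr j)) * (∑ i, x (Sum.inl i)) := by
    rw [← Finset.sum_mul]
  rw [e1, e2]
  simp only [smul_eq_mul]
  ring

private lemma keypos (β S M P Q A B : ℝ) (hβ : 0 < β)
    (hS : 0 < S) (hM : 0 < M)
    (hK1 : 0 < β*M - 2) (hK2 : 0 < β*S + M - 3)
    (hkey : β^2*S*M < (β*M - 2)*(β*S + M - 3))
    (hCS1 : A^2 ≤ S*P) (hCS2 : B^2 ≤ M*Q)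
    (hP : 0 ≤ P) (hQ : 0 ≤ Q) (hPQ : 0 < P + Q) :
    0 < (β*(S+M) - 2)*P + (β*S + M - 3)*Q - β*(A^2 + 2*A*B) := by
  set K1 := β*M - 2 with hK1d
  set K2 := β*S + M - 3 with hK2d
  by_cases hAB : A = 0 ∧ B = 0
  · obtain ⟨hA, hB⟩ := hAB
    rw [hA, hB]
    have hcoefP : 0 < β*(S+M) - 2 := by nlinarith
    rcases lt_or_ge 0 P with hP' | hP'
    · nlinarith
    · have hPz : P = 0 := le_antisymm hP' hP
      have hQ' : 0 < Q := by rw [hPz] at hPQ; linarith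
      nlinarith
  · have hH : 0 < M*K1*A^2 + S*K2*B^2 - 2*β*S*M*A*B := by
      have e : K2*(M*K1*A^2 + S*K2*B^2 - 2*β*S*M*A*B)
          = M*A^2*(K1*K2 - β^2*S*M) + S*(K2*B - β*M*A)^2 := by ring
      have hpos : 0 < M*A^2*(K1*K2 - β^2*S*M) + S*(K2*B - β*M*A)^2 := by
        rcases eq_or_ne A 0 with hA | hA
        · have hB : B ≠ 0 := fun hB => hAB ⟨hA, hB⟩
          rw [hA]
          have : (K2*B - β*M*0)^2 = (K2*B)^2 := by ring
          have hKB : 0 < (K2*B)^2 := by positivity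
          nlinarith
        · have h1 : 0 < M*A^2*(K1*K2 - β^2*S*M) := by
            have hA2 : 0 < A^2 := by positivity
            exact mul_pos (mul_pos hM hA2) (by linarith)
          nlinarith [sq_nonneg (K2*B - β*M*A)]
      nlinarith
    have e2 : S*M*((β*(S+M) - 2)*P + K2*Q - β*(A^2 + 2*A*B))
        = (M*K1*A^2 + S*K2*B^2 - 2*β*S*M*A*B)
          + M*(β*S + K1)*(S*P - A^2) + S*K2*(M*Q - B^2) := by
      rw [hK1d, hK2d]; ring
    have h3 : 0 < S*M*((β*(S+M) - 2)*P + K2*Q - β*(A^2 + 2*A*B)) := by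
      rw [e2]
      have t1 : 0 ≤ M*(β*S + K1)*(S*P - A^2) :=
        mul_nonneg (mul_nonneg hM.le (by nlinarith)) (by linarith)
      have t2 : 0 ≤ S*K2*(M*Q - B^2) :=
        mul_nonneg (mul_nonneg hS.le hK2.le) (by linarith)
      linarith
    have hSM : 0 < S*M := mul_pos hS hM
    by_contra hcon
    push_neg at hcon
    nlinarith

set_option maxHeartbeats 1000000 in
private lemma regimes (α : ℝ) (hα0 : 0 ≤ α) (hα1 : α < 1) (S M N : ℝ)
    (hS1 : 1 ≤ S) (hM1 : 3*S + 1 ≤ 2*M) (hN : N = S + M)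
    (hfn : (if α ≤ 1/2 then (20:ℝ) else if α ≤ 5/7 then 25 else 7/(1-α) + 3) ≤ N) :
    0 < (1-α)*M - 2 ∧ 0 < (1-α)*S + M - 3 ∧
      (1-α)^2*S*M < ((1-α)*M - 2)*((1-α)*S + M - 3) := by
  set β := 1 - α with hβd
  have hβ0 : 0 < β := by simp [hβd]; linarith
  have hβ1 : β ≤ 1 := by simp [hβd]; linarith
  have h5M : 3*N ≤ 5*M - 1 := by rw [hN]; linarith
  by_cases h1 : α ≤ 1/2
  · rw [if_pos h1] at hfn
    have hβh : 1/2 ≤ β := by simp [hβd]; linarith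
    have hM' : 61/5 ≤ M := by linarith
    refine ⟨by nlinarith, by nlinarith, ?_⟩
    nlinarith [mul_nonneg hβ0.le (by linarith : (0:ℝ) ≤ 2*M - 1 - 3*S),
      mul_nonneg (by linarith : (0:ℝ) ≤ β - 1/2) (by nlinarith : (0:ℝ) ≤ 3*M^2 - 13*M + 2)]
  · rw [if_neg h1] at hfn
    by_cases h2 : α ≤ 5/7
    · rw [if_pos h2] at hfn
      have hβh : 2/7 ≤ β := by simp [hβd]; linarith
      have hM' : 76/5 ≤ M := by linarith
      refine ⟨by nlinarith, by nlinarith, ?_⟩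
      nlinarith [mul_nonneg hβ0.le (by linarith : (0:ℝ) ≤ 2*M - 1 - 3*S),
        mul_nonneg (by linarith : (0:ℝ) ≤ β - 2/7) (by nlinarith : (0:ℝ) ≤ 3*M^2 - 13*M + 2)]
    · rw [if_neg h2] at hfn
      have hβh : β < 2/7 := by simp [hβd]; linarith
      have h7 : 7 ≤ β*(N - 3) := by
        rw [hβd]
        have h7' : 7/(1-α) ≤ N - 3 := by linarith
        calc (7:ℝ) = (1-α) * (7/(1-α)) := by field_simp [show (1:ℝ)-α ≠ 0 by linarith]
        _ ≤ (1-α) * (N-3) := by apply mul_le_mul_of_nonneg_left h7' (by linarith)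
      have hb : 21 ≤ β*(5*M - 10) := by
        have : β*(5*M - 10 - 3*(N-3)) ≥ 0 := by
          apply mul_nonneg hβ0.le; rw [hN]; linarith
        nlinarith
      have hN0 : 0 < N - 3 := by nlinarith
      have hN3 : 49/2 ≤ N - 3 := by
        have h27 := mul_lt_mul_of_pos_right hβh hN0
        nlinarith
      have hM' : 16 ≤ M := by linarith
      have ha : (0:ℝ) ≤ β*(2*M - 1 - 3*S) :=
        mul_nonneg hβ0.le (by linarith)
      have hbb : (0:ℝ) ≤ (β*(5*M-10) - 21)*(3*M - 7) :=
        mul_nonneg (by linarith) (by linarith)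
      have hc : (0:ℝ) ≤ (2/7 - β)*12 := by nlinarith
      refine ⟨by nlinarith, by nlinarith, ?_⟩
      nlinarith [ha, hbb, hc]

end AuxiliaryLemmas

theorem rhoAlpha_case21_lt (α : ℝ) (hα0 : 0 ≤ α) (hα1 : α < 1)
    (s n : ℕ) (hs : 1 ≤ s) (hn : n = s + 3 * s / 2 + 1) (hfn : fAlpha α ≤ (n : ℝ)) :
    rhoAlpha α ((⊤ : SimpleGraph (Fin s)) ∨g (⊥ : SimpleGraph (Fin (3 * s / 2 + 1))))
      < (n : ℝ) - 3 := by
  classical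
  set m : ℕ := 3 * s / 2 + 1 with hm
  have hnm : n = s + m := by omega
  have hM1 : 3 * s + 1 ≤ 2 * m := by omega
  have hNR : (n : ℝ) = (s : ℝ) + (m : ℝ) := by rw [hnm]; push_cast; ring
  have hS1 : (1:ℝ) ≤ (s:ℝ) := by exact_mod_cast hs
  have hM1R : 3*(s:ℝ) + 1 ≤ 2*(m:ℝ) := by exact_mod_cast hM1
  rw [fAlpha] at hfn
  obtain ⟨hK1, hK2, hkey⟩ := regimes α hα0 hα1 (s:ℝ) (m:ℝ) (n:ℝ) hS1 hM1R hNR hfn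
  have hSpos : (0:ℝ) < (s:ℝ) := by linarith
  have hMpos : (0:ℝ) < (m:ℝ) := by linarith
  have hc0 : (0:ℝ) < (n:ℝ) - 3 := by
    have : (1-α)*(s:ℝ) ≤ (s:ℝ) := by nlinarith
    rw [hNR]; linarith
  rw [rhoAlpha]
  apply sSupSpecLt _ _ hc0
  apply specLt
  intro x hx
  rw [quadform α hs]
  set P := ∑ i, x (Sum.inl i)^2 with hPd
  set Q := ∑ j, x (Sum.inr j)^2 with hQd
  set A := ∑ i, x (Sum.inl i) with hAd
  set B := ∑ j, x (Sum.inr j) with hBd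
  have hP : 0 ≤ P := Finset.sum_nonneg (fun i _ => sq_nonneg _)
  have hQ : 0 ≤ Q := Finset.sum_nonneg (fun j _ => sq_nonneg _)
  have hCS1 : A^2 ≤ (s:ℝ)*P := by
    have := sq_sum_le_card_mul_sum_sq (s := (Finset.univ : Finset (Fin s)))
      (f := fun i => x (Sum.inl i))
    simpa using this
  have hCS2 : B^2 ≤ (m:ℝ)*Q := by
    have := sq_sum_le_card_mul_sum_sq (s := (Finset.univ : Finset (Fin m)))
      (f := fun j => x (Sum.inr j))
    simpa using this
  have hPQ : 0 < P + Q := by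
    obtain ⟨v, hv⟩ := Function.ne_iff.1 hx
    have hv2 : 0 < x v ^ 2 := pow_two_pos_of_ne_zero hv
    cases v with
    | inl i =>
      have h1 : x (Sum.inl i) ^ 2 ≤ P :=
        Finset.single_le_sum (f := fun i => x (Sum.inl i)^2) (fun j _ => sq_nonneg _) (mem_univ i)
      linarith
    | inr j =>
      have h1 : x (Sum.inr j) ^ 2 ≤ Q :=
        Finset.single_le_sum (f := fun j => x (Sum.inr j)^2) (fun j _ => sq_nonneg _) (mem_univ j)
      linarith
  have hk := keypos (1-α) (s:ℝ) (m:ℝ) P Q A B (by linarith) hSpos hMpos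
      hK1 hK2 hkey hCS1 hCS2 hP hQ hPQ
  have heq : ((n:ℝ) - 3 - α*((s:ℝ) - 1 + m)) * P + ((n:ℝ) - 3 - α*s) * Q
      - (1-α) * (A^2 - P + 2*A*B)
      = ((1-α)*((s:ℝ)+(m:ℝ)) - 2)*P + ((1-α)*(s:ℝ) + (m:ℝ) - 3)*Q - (1-α)*(A^2 + 2*A*B) := by
    rw [hNR]; ring
  rw [heq]
  exact hk
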